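/- For 0 < α < 1, the second derivative of η_α satisfies |η_α''(x)| ≤ K₂(α) for all x in (0, π), where K₂(α) = (K₁(α)² - 1)/2 and K₁(α) = max{α/(1-α), (1-α)/α}. -/

import Mathlib

open Real Set

private lemma hasDerivAt_cot' (x : ℝ) (h : Real.sin x ≠ 0) :
    HasDerivAt Real.cot (-1 / Real.sin x ^ 2) x := by
  have hd := (Real.hasDerivAt_cos x).div (Real.hasDerivAt_sin x) h
  have e : Real.cot = fun y => Real.cos y / Real.sin y := by
    funext y; exact Real.cot_eq_cos_div_sin y
  rw [e]
  refine hd.congr_deriv ?_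
  symm
  field_simp
  nlinarith [Real.sin_sq_add_cos_sq x]

private lemma D_pos {κ : ℝ} (hκ : 0 < κ) (y : ℝ) :
    0 < Real.sin (y / 2) ^ 2 + κ ^ 2 * Real.cos (y / 2) ^ 2 := by
  rcases eq_or_ne (Real.sin (y / 2)) 0 with hs | hs
  · have hc : Real.cos (y / 2) ^ 2 = 1 := by nlinarith [Real.sin_sq_add_cos_sq (y / 2)]
    rw [hs, hc]; positivity
  · have : 0 < Real.sin (y / 2) ^ 2 := by positivity
    nlinarith [sq_nonneg (Real.cos (y / 2)), sq_nonneg κ]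

/-- First derivative of `η`. -/
private lemma hasDerivAt_eta {κ : ℝ} (hκ : 0 < κ) {y : ℝ} (hy : y ∈ Ioo (0 : ℝ) π) :
    HasDerivAt (fun y : ℝ => 2 * arctan (κ * Real.cot (y / 2)))
      (-κ / (Real.sin (y / 2) ^ 2 + κ ^ 2 * Real.cos (y / 2) ^ 2)) y := by
  have hs : 0 < Real.sin (y / 2) :=
    Real.sin_pos_of_pos_of_lt_pi (by linarith [hy.1]) (by linarith [hy.2, Real.pi_pos])
  have hs' : Real.sin (y / 2) ≠ 0 := ne_of_gt hs
  have h1 : HasDerivAt (fun y : ℝ => y / 2) (1 / 2) y := by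
    simpa using (hasDerivAt_id y).div_const 2
  have h2 : HasDerivAt (fun y : ℝ => Real.cot (y / 2))
      (-1 / Real.sin (y / 2) ^ 2 * (1 / 2)) y :=
    by have h := (hasDerivAt_cot' (y / 2) hs').comp y h1; exact h
  have h3 : HasDerivAt (fun y : ℝ => κ * Real.cot (y / 2))
      (κ * (-1 / Real.sin (y / 2) ^ 2 * (1 / 2))) y := h2.const_mul κ
  have h4 : HasDerivAt (fun y : ℝ => arctan (κ * Real.cot (y / 2)))
      (1 / (1 + (κ * Real.cot (y / 2)) ^ 2) *
        (κ * (-1 / Real.sin (y / 2) ^ 2 * (1 / 2)))) y :=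
    by have h := (Real.hasDerivAt_arctan (κ * Real.cot (y / 2))).comp y h3; exact h
  have h5 := h4.const_mul 2
  refine h5.congr_deriv ?_
  symm
  rw [Real.cot_eq_cos_div_sin]
  have hD := D_pos hκ y
  have h1p : (0:ℝ) < 1 + (κ * (Real.cos (y/2) / Real.sin (y/2))) ^ 2 := by positivity
  field_simp

/-- Second derivative of `η`. -/
private lemma hasDerivAt_eta' {κ : ℝ} (hκ : 0 < κ) (y : ℝ) :
    HasDerivAt (fun y : ℝ => -κ / (Real.sin (y / 2) ^ 2 + κ ^ 2 * Real.cos (y / 2) ^ 2))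
      (κ * ((1 - κ ^ 2) * (Real.sin (y / 2) * Real.cos (y / 2))) /
        (Real.sin (y / 2) ^ 2 + κ ^ 2 * Real.cos (y / 2) ^ 2) ^ 2) y := by
  have h1 : HasDerivAt (fun y : ℝ => y / 2) (1 / 2) y := by
    simpa using (hasDerivAt_id y).div_const 2
  have hsin : HasDerivAt (fun y : ℝ => Real.sin (y / 2)) (Real.cos (y / 2) * (1 / 2)) y :=
    by have h := (Real.hasDerivAt_sin (y / 2)).comp y h1; exact h
  have hcos : HasDerivAt (fun y : ℝ => Real.cos (y / 2)) (-Real.sin (y / 2) * (1 / 2)) y :=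
    by have h := (Real.hasDerivAt_cos (y / 2)).comp y h1; exact h
  have hD : HasDerivAt (fun y : ℝ => Real.sin (y / 2) ^ 2 + κ ^ 2 * Real.cos (y / 2) ^ 2)
      (2 * Real.sin (y / 2) ^ 1 * (Real.cos (y / 2) * (1 / 2)) +
        κ ^ 2 * (2 * Real.cos (y / 2) ^ 1 * (-Real.sin (y / 2) * (1 / 2)))) y := by
    exact ((hsin.pow 2).add ((hcos.pow 2).const_mul (κ ^ 2)))
  have hDpos := D_pos hκ y
  have h := (hasDerivAt_const y (-κ)).div hD (ne_of_gt hDpos)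
  refine h.congr_deriv ?_
  symm
  field_simp
  ring

private lemma key_core {κ s c D : ℝ} (hκ : 0 < κ) (hs : 0 ≤ s) (hc : 0 ≤ c)
    (hsc : s ^ 2 + c ^ 2 = 1) (hD : D = s ^ 2 + κ ^ 2 * c ^ 2) :
    |κ * ((1 - κ ^ 2) * (s * c)) / D ^ 2| ≤ ((max κ κ⁻¹) ^ 2 - 1) / 2 := by
  have hDpos : 0 < D := by
    rcases eq_or_ne s 0 with h | h
    · have hc1 : c ^ 2 = 1 := by nlinarith
      rw [hD, h, hc1]; positivity
    · have : 0 < s ^ 2 := by positivity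
      nlinarith [sq_nonneg c, sq_nonneg κ]
  have hamgm : 2 * κ * s * c ≤ D := by nlinarith [sq_nonneg (s - κ * c)]
  rw [abs_div, abs_of_pos (by positivity : (0:ℝ) < D ^ 2), div_le_iff₀ (by positivity)]
  rcases le_total 1 κ with h1 | h1
  · have hinv : κ⁻¹ ≤ κ := le_trans (inv_le_one_of_one_le₀ h1) h1
    rw [max_eq_left hinv]
    have hκ21 : (0:ℝ) ≤ κ ^ 2 - 1 := by nlinarith
    have hDge1 : 1 ≤ D := by nlinarith [mul_nonneg hκ21 (sq_nonneg c)]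
    have h2 : 2 * κ * s * c ≤ D ^ 2 := by
      nlinarith [mul_nonneg hDpos.le (sub_nonneg.2 hDge1)]
    have habs : |κ * ((1 - κ ^ 2) * (s * c))| = κ * ((κ ^ 2 - 1) * (s * c)) := by
      rw [abs_of_nonpos (by nlinarith [mul_nonneg (mul_nonneg hκ.le hκ21) (mul_nonneg hs hc)])]
      ring
    rw [habs]
    nlinarith [mul_le_mul_of_nonneg_left h2 hκ21]
  · have hinv : κ ≤ κ⁻¹ := le_trans h1 ((one_le_inv₀ hκ).2 h1)
    rw [max_eq_right hinv]
    have h1κ2 : (0:ℝ) ≤ 1 - κ ^ 2 := by nlinarith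
    have hDgeκ2 : κ ^ 2 ≤ D := by nlinarith [mul_nonneg h1κ2 (sq_nonneg s)]
    have h2 : 2 * κ ^ 3 * s * c ≤ D ^ 2 := by
      nlinarith [mul_nonneg hDpos.le (sub_nonneg.2 hDgeκ2),
        mul_le_mul_of_nonneg_left hamgm (sq_nonneg κ)]
    have habs : |κ * ((1 - κ ^ 2) * (s * c))| = κ * ((1 - κ ^ 2) * (s * c)) := by
      rw [abs_of_nonneg (by nlinarith [mul_nonneg (mul_nonneg hκ.le h1κ2) (mul_nonneg hs hc)])]
    have hκ0 : κ ≠ 0 := ne_of_gt hκ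
    rw [habs, show (κ⁻¹ ^ 2 - 1) / 2 = (1 - κ ^ 2) / (2 * κ ^ 2) by
      rw [inv_pow]; field_simp]
    rw [div_mul_eq_mul_div, le_div_iff₀ (by positivity : (0:ℝ) < 2 * κ ^ 2)]
    nlinarith [mul_le_mul_of_nonneg_left h2 h1κ2]

/-- `|η_α''(x)| ≤ K₂(α) = (K₁(α)² - 1)/2` on `(0, π)`, where
`K₁(α) = max{α/(1-α), (1-α)/α}`. -/
theorem eta_second_deriv_bound (α : ℝ) (hα0 : 0 < α) (hα1 : α < 1) :
    ∀ x ∈ Ioo (0 : ℝ) π,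
      |deriv (deriv (fun y : ℝ => 2 * arctan ((α / (1 - α)) * Real.cot (y / 2)))) x|
        ≤ ((max (α / (1 - α)) ((1 - α) / α)) ^ 2 - 1) / 2 := by
  intro x hx
  set κ := α / (1 - α) with hκdef
  have hκ : 0 < κ := div_pos hα0 (by linarith)
  have hκinv : (1 - α) / α = κ⁻¹ := by
    rw [hκdef]; field_simp
  have hEq : deriv (fun y : ℝ => 2 * arctan (κ * Real.cot (y / 2)))
      =ᶠ[nhds x] (fun y : ℝ => -κ / (Real.sin (y / 2) ^ 2 + κ ^ 2 * Real.cos (y / 2) ^ 2)) := by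
    filter_upwards [isOpen_Ioo.mem_nhds hx] with y hy
    exact (hasDerivAt_eta hκ hy).deriv
  rw [hEq.deriv_eq, (hasDerivAt_eta' hκ x).deriv, hκinv]
  have hs : 0 ≤ Real.sin (x / 2) :=
    (Real.sin_pos_of_pos_of_lt_pi (by linarith [hx.1]) (by linarith [hx.2, Real.pi_pos])).le
  have hc : 0 ≤ Real.cos (x / 2) :=
    Real.cos_nonneg_of_mem_Icc ⟨by linarith [hx.1, Real.pi_pos], by linarith [hx.2]⟩
  exact key_core hκ hs hc (Real.sin_sq_add_cos_sq (x / 2)) rfl
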